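/- Let 𝒢 ⊆ 𝒢∘ be sub-σ-algebras of ℱ, N a finite set, and G = (N, E_G) a directed graph without self-loops with in-neighborhoods N_G(i). Let (Y_{i,1})_{i∈N} and (Y_{j,0})_{j∈N} be bounded random variables, and suppose E[Y_{j,0} | 𝒢∘] = E[Y_{j,0} | 𝒢] =: μ_{j,0} almost surely for every j ∈ N. Define ε_{i,1} = Y_{i,1} − E[Y_{i,1} | 𝒢], ε_{j,0} = Y_{j,0} − μ_{j,0}, and a_i = Σ_{j∈N_G(i)} ε_{j,0}. Then, almost surely, Σ_{i∈N} Σ_{j∈N_G(i)} Cov(Y_{i,1}, Y_{j,0} | 𝒢∘) = Σ_{i∈N} E[ε_{i,1} a_i | 𝒢∘]. -/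

import Mathlib

open MeasureTheory ProbabilityTheory

/-- Conditional covariance of two real random variables given a sub-σ-algebra `m`. -/
noncomputable def condCov {Ω : Type*} {m0 : MeasurableSpace Ω} (μ : Measure Ω)
    (m : MeasurableSpace Ω) (X Y : Ω → ℝ) : Ω → ℝ :=
  fun ω => (μ[fun ω' => X ω' * Y ω' | m]) ω - (μ[X | m]) ω * (μ[Y | m]) ω

/-- In-neighborhood of `i` in the directed graph with edge set `E`. -/
def inNbhd {N : Type*} [Fintype N] [DecidableEq N] (E : Finset (N × N)) (i : N) : Finset N :=
  Finset.univ.filter (fun j => (i, j) ∈ E)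

/-- identity (equiv), `C_G = C̃_G`, Section 3.3 of He–Song, "Measuring
Diffusion over a Large Network".  If `E[Y_{j,0} | 𝒢∘] = E[Y_{j,0} | 𝒢]` a.s. for all `j`,
then a.s.
`Σ_i Σ_{j ∈ N_G(i)} Cov(Y_{i,1}, Y_{j,0} | 𝒢∘) = Σ_i E[ε_{i,1} a_i | 𝒢∘]`,
where `ε_{i,1} = Y_{i,1} − E[Y_{i,1}|𝒢]`, `ε_{j,0} = Y_{j,0} − E[Y_{j,0}|𝒢]` and
`a_i = Σ_{j ∈ N_G(i)} ε_{j,0}`. -/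
private lemma stmt8_aux {Ω : Type*} [mΩ : MeasurableSpace Ω] (μ : Measure Ω) [IsProbabilityMeasure μ] (X Y : Ω → ℝ) (hXm : Measurable X) (hYm : Measurable Y)
    (hXb : ∃ C : ℝ, ∀ ω, |X ω| ≤ C) (hYb : ∃ C : ℝ, ∀ ω, |Y ω| ≤ C)
    (G G0 : MeasurableSpace Ω) (hGG0 : G ≤ G0) (hG0 : G0 ≤ mΩ)
    (hmu : μ[Y | G0] =ᵐ[μ] μ[Y | G]) :
    (μ[fun ω => (X ω - (μ[X | G]) ω) * (Y ω - (μ[Y | G]) ω) | G0]) =ᵐ[μ]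
      fun ω => (μ[fun ω' => X ω' * Y ω' | G0]) ω - (μ[X | G0]) ω * (μ[Y | G0]) ω := by
  obtain ⟨CX, hCX⟩ := hXb
  obtain ⟨CY, hCY⟩ := hYb
  have hXint : Integrable X μ :=
    ⟨hXm.aestronglyMeasurable, HasFiniteIntegral.of_bounded (C := CX)
      (Filter.Eventually.of_forall fun ω => by rw [Real.norm_eq_abs]; exact hCX ω)⟩
  have hYint : Integrable Y μ :=
    ⟨hYm.aestronglyMeasurable, HasFiniteIntegral.of_bounded (C := CY)
      (Filter.Eventually.of_forall fun ω => by rw [Real.norm_eq_abs]; exact hCY ω)⟩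
  set mX : Ω → ℝ := μ[X | G] with hmX
  set mY : Ω → ℝ := μ[Y | G] with hmY
  have hmXb : ∀ᵐ ω ∂μ, |mX ω| ≤ (CX.toNNReal : ℝ) :=
    ae_bdd_condExp_of_ae_bdd (Filter.Eventually.of_forall fun ω =>
      (hCX ω).trans (Real.le_coe_toNNReal CX))
  have hmYb : ∀ᵐ ω ∂μ, |mY ω| ≤ (CY.toNNReal : ℝ) :=
    ae_bdd_condExp_of_ae_bdd (Filter.Eventually.of_forall fun ω =>
      (hCY ω).trans (Real.le_coe_toNNReal CY))
  have hmXmeas : StronglyMeasurable[G0] mX := stronglyMeasurable_condExp.mono hGG0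
  have hmYmeas : StronglyMeasurable[G0] mY := stronglyMeasurable_condExp.mono hGG0
  -- Integrabilities
  have hXY : Integrable (fun ω => X ω * Y ω) μ :=
    hYint.bdd_mul hXm.aestronglyMeasurable
      (Filter.Eventually.of_forall fun ω => by rw [Real.norm_eq_abs]; exact hCX ω)
  have hXmY : Integrable (fun ω => mY ω * X ω) μ :=
    hXint.bdd_mul (hmYmeas.mono hG0).aestronglyMeasurable
      (by filter_upwards [hmYb] with ω h; rw [Real.norm_eq_abs]; exact h)
  have hmXeY : Integrable (fun ω => mX ω * (Y ω - mY ω)) μ :=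
    (hYint.sub integrable_condExp).bdd_mul (hmXmeas.mono hG0).aestronglyMeasurable
      (by filter_upwards [hmXb] with ω h; rw [Real.norm_eq_abs]; exact h)
  -- Step 1: split ε_X ε_Y = X * εY - mX * εY
  have h1 : (μ[fun ω => (X ω - mX ω) * (Y ω - mY ω) | G0]) =ᵐ[μ]
      μ[fun ω => X ω * (Y ω - mY ω) | G0] - μ[fun ω => mX ω * (Y ω - mY ω) | G0] := by
    have heq : (fun ω => (X ω - mX ω) * (Y ω - mY ω)) =
        (fun ω => X ω * (Y ω - mY ω)) - (fun ω => mX ω * (Y ω - mY ω)) := by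
      funext ω; simp [sub_mul]
    rw [heq]
    exact condExp_sub
      ((hYint.sub integrable_condExp).bdd_mul hXm.aestronglyMeasurable
        (Filter.Eventually.of_forall fun ω => by rw [Real.norm_eq_abs]; exact hCX ω)) hmXeY G0
  -- μ[εY | G0] =ᵐ 0
  have hεY0 : (μ[fun ω => Y ω - mY ω | G0]) =ᵐ[μ] 0 := by
    have := condExp_sub (m := G0) hYint (integrable_condExp (f := Y) (m := G))
    refine this.trans ?_
    have h2 : (μ[mY | G0]) = mY :=
      condExp_of_stronglyMeasurable hG0 hmYmeas integrable_condExp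
    rw [h2]
    filter_upwards [hmu] with ω h
    simp [h]
  -- second term vanishes
  have h2 : (μ[fun ω => mX ω * (Y ω - mY ω) | G0]) =ᵐ[μ] 0 := by
    have hεint : Integrable (fun ω => Y ω - mY ω) μ :=
      hYint.sub (integrable_condExp (f := Y) (m := G))
    have hp := condExp_stronglyMeasurable_mul_of_bound (g := fun ω => Y ω - mY ω) hG0 hmXmeas
      hεint (CX.toNNReal : ℝ)
      (by filter_upwards [hmXb] with ω h; rw [Real.norm_eq_abs]; exact h)
    refine hp.trans ?_
    filter_upwards [hεY0] with ω h
    simp only [Pi.mul_apply, Pi.zero_apply] at h ⊢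
    rw [h, mul_zero]
  -- first term: μ[X*(Y - mY)|G0] = μ[XY|G0] - mY * μ[X|G0]
  have h3 : (μ[fun ω => X ω * (Y ω - mY ω) | G0]) =ᵐ[μ]
      fun ω => (μ[fun ω' => X ω' * Y ω' | G0]) ω - mY ω * (μ[X | G0]) ω := by
    have heq : (fun ω => X ω * (Y ω - mY ω)) =
        (fun ω => X ω * Y ω) - (fun ω => mY ω * X ω) := by
      funext ω; ring_nf; simp [mul_sub, mul_comm]
    rw [heq]
    refine (condExp_sub hXY hXmY G0).trans ?_
    have hp := condExp_stronglyMeasurable_mul_of_bound hG0 hmYmeas hXint (CY.toNNReal : ℝ)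
      (by filter_upwards [hmYb] with ω h; rw [Real.norm_eq_abs]; exact h)
    filter_upwards [hp] with ω h
    have h' : (μ[fun ω => mY ω * X ω|G0]) ω = mY ω * (μ[X|G0]) ω := h
    simp only [Pi.sub_apply]
    rw [h']
  -- combine
  refine h1.trans ?_
  filter_upwards [h2, h3, hmu] with ω hh2 hh3 hhmu
  simp only [Pi.sub_apply, Pi.zero_apply] at hh2 hh3 ⊢
  rw [hh2, hh3, hhmu, sub_zero]
  ring

theorem stmt8 {Ω : Type*} [mΩ : MeasurableSpace Ω]
    (μ : Measure Ω) [IsProbabilityMeasure μ]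
    {N : Type*} [Fintype N] [DecidableEq N]
    (E : Finset (N × N)) (hE : ∀ e ∈ E, e.1 ≠ e.2)
    (Y0 Y1 : N → Ω → ℝ)
    (hY0m : ∀ j, Measurable (Y0 j)) (hY1m : ∀ i, Measurable (Y1 i))
    (hY0b : ∀ j, ∃ C : ℝ, ∀ ω, |Y0 j ω| ≤ C)
    (hY1b : ∀ i, ∃ C : ℝ, ∀ ω, |Y1 i ω| ≤ C)
    (G G0 : MeasurableSpace Ω) (hGG0 : G ≤ G0) (hG0 : G0 ≤ mΩ)
    (hmu : ∀ j : N, μ[Y0 j | G0] =ᵐ[μ] μ[Y0 j | G]) :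
    ∀ᵐ ω ∂μ,
      (∑ i, ∑ j ∈ inNbhd E i, condCov μ G0 (Y1 i) (Y0 j) ω)
        = ∑ i,
            (μ[fun ω' => (Y1 i ω' - (μ[Y1 i | G]) ω')
                  * ∑ j ∈ inNbhd E i, (Y0 j ω' - (μ[Y0 j | G]) ω') | G0]) ω := by
  classical
  have key : ∀ i j : N, (μ[fun ω => (Y1 i ω - (μ[Y1 i | G]) ω) * (Y0 j ω - (μ[Y0 j | G]) ω) | G0])
      =ᵐ[μ] condCov μ G0 (Y1 i) (Y0 j) :=
    fun i j => stmt8_aux (mΩ := mΩ) μ (Y1 i) (Y0 j) (hY1m i) (hY0m j) (hY1b i) (hY0b j) G G0 hGG0 hG0 (hmu j)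
  have main : ∀ i : N, ∀ᵐ ω ∂μ,
      (∑ j ∈ inNbhd E i, condCov μ G0 (Y1 i) (Y0 j) ω)
        = (μ[fun ω' => (Y1 i ω' - (μ[Y1 i | G]) ω')
              * ∑ j ∈ inNbhd E i, (Y0 j ω' - (μ[Y0 j | G]) ω') | G0]) ω := by
    intro i
    obtain ⟨C1, hC1⟩ := hY1b i
    have hY1int : Integrable (Y1 i) μ :=
      ⟨(hY1m i).aestronglyMeasurable, HasFiniteIntegral.of_bounded (C := C1)
        (Filter.Eventually.of_forall fun ω => by rw [Real.norm_eq_abs]; exact hC1 ω)⟩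
    have hε1b : ∀ᵐ ω ∂μ, ‖Y1 i ω - (μ[Y1 i | G]) ω‖ ≤ C1 + (C1.toNNReal : ℝ) := by
      have hmb : ∀ᵐ ω ∂μ, |(μ[Y1 i | G]) ω| ≤ (C1.toNNReal : ℝ) :=
        ae_bdd_condExp_of_ae_bdd (Filter.Eventually.of_forall fun ω =>
          (hC1 ω).trans (Real.le_coe_toNNReal C1))
      filter_upwards [hmb] with ω h
      rw [Real.norm_eq_abs]
      calc |Y1 i ω - (μ[Y1 i | G]) ω| ≤ |Y1 i ω| + |(μ[Y1 i | G]) ω| := abs_sub _ _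
        _ ≤ C1 + (C1.toNNReal : ℝ) := add_le_add (hC1 ω) h
    have hε1m : AEStronglyMeasurable[mΩ] (fun ω => Y1 i ω - (μ[Y1 i | G]) ω) μ :=
      ((hY1m i).aestronglyMeasurable.sub
        (stronglyMeasurable_condExp.mono (hGG0.trans hG0)).aestronglyMeasurable)
    have hterm : ∀ j : N,
        Integrable (fun ω => (Y1 i ω - (μ[Y1 i | G]) ω) * (Y0 j ω - (μ[Y0 j | G]) ω)) μ := by
      intro j
      obtain ⟨C0, hC0⟩ := hY0b j
      have hY0int : Integrable (Y0 j) μ :=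
        ⟨(hY0m j).aestronglyMeasurable, HasFiniteIntegral.of_bounded (C := C0)
          (Filter.Eventually.of_forall fun ω => by rw [Real.norm_eq_abs]; exact hC0 ω)⟩
      exact (hY0int.sub (integrable_condExp (f := Y0 j) (m := G))).bdd_mul hε1m hε1b
    have sumstep : (μ[fun ω' => (Y1 i ω' - (μ[Y1 i | G]) ω')
          * ∑ j ∈ inNbhd E i, (Y0 j ω' - (μ[Y0 j | G]) ω') | G0])
        =ᵐ[μ] ∑ j ∈ inNbhd E i,
          μ[fun ω => (Y1 i ω - (μ[Y1 i | G]) ω) * (Y0 j ω - (μ[Y0 j | G]) ω) | G0] := by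
      have heq : (fun ω' => (Y1 i ω' - (μ[Y1 i | G]) ω')
            * ∑ j ∈ inNbhd E i, (Y0 j ω' - (μ[Y0 j | G]) ω'))
          = ∑ j ∈ inNbhd E i,
              (fun ω => (Y1 i ω - (μ[Y1 i | G]) ω) * (Y0 j ω - (μ[Y0 j | G]) ω)) := by
        funext ω
        rw [Finset.sum_apply, Finset.mul_sum]
      rw [heq]
      exact condExp_finset_sum (fun j _ => hterm j) G0
    have hjs : ∀ᵐ ω ∂μ, ∀ j : N,
        (μ[fun ω => (Y1 i ω - (μ[Y1 i | G]) ω) * (Y0 j ω - (μ[Y0 j | G]) ω) | G0]) ω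
          = condCov μ G0 (Y1 i) (Y0 j) ω :=
      ae_all_iff.2 fun j => key i j
    filter_upwards [sumstep, hjs] with ω h1 h2
    rw [h1, Finset.sum_apply]
    exact (Finset.sum_congr rfl fun j _ => h2 j).symm
  filter_upwards [ae_all_iff.2 main] with ω h
  exact Finset.sum_congr rfl fun i _ => h i
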